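/- Let Y be a real symmetric positive semi-definite n×n matrix with full eigendecomposition Y = Φ diag(Σ_Y, 0) Φᵀ, where Φ is n×n orthogonal, Σ_Y is the K×K diagonal matrix of the K strictly positive eigenvalues of Y, and the remaining n−K eigenvalues are zero. Let W₀ be a real symmetric positive semi-definite n×n matrix. Define, for t ≥ 0, the n×n block-diagonal matrices G(t) = diag(Σ_Y⁻¹(e^{2Σ_Y t} − I_K), 2t·I_{n−K}) and S(t) = diag(e^{Σ_Y t}, I_{n−K}), and set W̃₀ = Φᵀ W₀ Φ. Then for every t ≥ 0 the matrix I_n + G(t) W̃₀ is invertible, and the function W(t) = Φ S(t) W̃₀ (I_n + G(t) W̃₀)⁻¹ S(t)ᵀ Φᵀ is the unique solution of the matrix Riccati differential equation Ẇ = WY + YW − 2W² with initial condition W(0) = W₀. -/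

import Mathlib

open scoped Matrix.Norms.L2Operator
open scoped Matrix

theorem diag_sum (n : ℕ) (v : Fin n → ℝ) :
    Matrix.diagonal v = ∑ i : Fin n, v i • Matrix.single i i (1:ℝ) := by
  ext a b
  rw [Matrix.sum_apply]
  by_cases h : a = b <;>
    simp [Matrix.single, Matrix.diagonal_apply, h, Finset.sum_ite_eq]
  exact (Finset.sum_eq_zero fun x _ => if_neg (fun hc => h (hc.1.symm.trans hc.2))).symm

theorem hasDerivAt_diagonal {n : ℕ} (f : Fin n → ℝ → ℝ) (f' : Fin n → ℝ) (t : ℝ)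
    (h : ∀ i, HasDerivAt (f i) (f' i) t) :
    HasDerivAt (fun x => Matrix.diagonal (fun i => f i x)) (Matrix.diagonal f') t := by
  have key : (fun x => Matrix.diagonal (fun i => f i x))
      = fun x => ∑ i : Fin n, f i x • Matrix.single i i (1:ℝ) := by
    funext x; exact diag_sum n _
  rw [key, diag_sum]
  exact HasDerivAt.fun_sum fun i _ => (h i).smul_const _

open scoped MatrixOrder in
theorem isUnit_one_add_psd_mul {m : ℕ} {P Q : Matrix (Fin m) (Fin m) ℝ}
    (hP : P.PosSemidef) (hQ : Q.PosSemidef) : IsUnit (1 + P * Q) := by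
  set R := CFC.sqrt P with hRdef
  have hR : R.PosSemidef := Matrix.nonneg_iff_posSemidef.mp (CFC.sqrt_nonneg P)
  have hRH : Rᴴ = R := hR.isHermitian
  have hpsd : (R * Q * R).PosSemidef := by
    have := hQ.mul_mul_conjTranspose_same R
    rwa [hRH] at this
  have hpd : (1 + R * Q * R).PosDef := Matrix.PosDef.one.add_posSemidef hpsd
  rw [Matrix.isUnit_iff_isUnit_det, isUnit_iff_ne_zero]
  have hdet : (1 + P * Q).det = (1 + R * Q * R).det := by
    rw [← CFC.sqrt_mul_sqrt_self P hP.nonneg, ← hRdef, mul_assoc, Matrix.det_one_add_mul_comm]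
  rw [hdet]
  exact hpd.det_pos.ne'


theorem riccati_algebra {m : ℕ} (Φ D a B v : Matrix (Fin m) (Fin m) ℝ)
    (hΦ2 : Φᵀ * Φ = 1) (hcomm : D * a = a * D) :
    Φ * ((D * a * B * v + a * B * -(v * ((a * a + a * a) * B) * v)) * a
      + a * B * v * (D * a)) * Φᵀ
    = Φ * (a * B * v * a) * Φᵀ * (Φ * D * Φᵀ) + Φ * D * Φᵀ * (Φ * (a * B * v * a) * Φᵀ)
      - 2 * (Φ * (a * B * v * a) * Φᵀ * (Φ * (a * B * v * a) * Φᵀ)) := by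
  have collapse : ∀ X Z : Matrix (Fin m) (Fin m) ℝ,
      Φ * X * Φᵀ * (Φ * Z * Φᵀ) = Φ * (X * Z) * Φᵀ := by
    intro X Z
    rw [show Φ * X * Φᵀ * (Φ * Z * Φᵀ) = Φ * (X * (Φᵀ * Φ) * Z) * Φᵀ from by noncomm_ring,
      hΦ2, mul_one]
  rw [collapse, collapse, collapse]
  have h1 : a * B * v * a * D = a * B * v * (D * a) := by rw [hcomm, mul_assoc]
  rw [h1]
  noncomm_ring

theorem closed_form_solution_symmetric_riccati
    (n K : ℕ) (hKn : K ≤ n)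
    (Φ : Matrix (Fin n) (Fin n) ℝ) (hΦ : Φ * Φᵀ = 1 ∧ Φᵀ * Φ = 1)
    (d : Fin n → ℝ)
    (hdpos : ∀ i : Fin n, (i : ℕ) < K → 0 < d i)
    (hdzero : ∀ i : Fin n, K ≤ (i : ℕ) → d i = 0)
    (Y : Matrix (Fin n) (Fin n) ℝ) (hY : Y = Φ * Matrix.diagonal d * Φᵀ)
    (W₀ : Matrix (Fin n) (Fin n) ℝ) (hW₀ : W₀.PosSemidef)
    (G S : ℝ → Matrix (Fin n) (Fin n) ℝ)
    (hG : ∀ t : ℝ, G t = Matrix.diagonal fun i =>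
      if i.val < K then (Real.exp (2 * d i * t) - 1) / d i else 2 * t)
    (hS : ∀ t : ℝ, S t = Matrix.diagonal fun i =>
      if i.val < K then Real.exp (d i * t) else 1)
    (tW₀ : Matrix (Fin n) (Fin n) ℝ) (htW₀ : tW₀ = Φᵀ * W₀ * Φ)
    (W : ℝ → Matrix (Fin n) (Fin n) ℝ)
    (hW : ∀ t : ℝ, W t = Φ * (S t * tW₀ * (1 + G t * tW₀)⁻¹ * (S t)ᵀ) * Φᵀ) :
    (∀ t : ℝ, 0 ≤ t → IsUnit (1 + G t * tW₀)) ∧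
    W 0 = W₀ ∧
    (∀ t : ℝ, 0 ≤ t →
      HasDerivWithinAt W (W t * Y + Y * W t - 2 * (W t * W t)) (Set.Ici 0) t) ∧
    (∀ W' : ℝ → Matrix (Fin n) (Fin n) ℝ, W' 0 = W₀ →
      (∀ t : ℝ, 0 ≤ t →
        HasDerivWithinAt W' (W' t * Y + Y * W' t - 2 * (W' t * W' t)) (Set.Ici 0) t) →
      ∀ t : ℝ, 0 ≤ t → W' t = W t) := by
  obtain ⟨hΦ1, hΦ2⟩ := hΦ
  -- tW₀ is PSD
  have hA : tW₀.PosSemidef := by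
    rw [htW₀]
    have := hW₀.mul_mul_conjTranspose_same Φᵀ
    rwa [Matrix.conjTranspose_eq_transpose_of_trivial, Matrix.transpose_transpose] at this
  -- G t is PSD for t ≥ 0
  have hGpsd : ∀ t : ℝ, 0 ≤ t → (G t).PosSemidef := by
    intro t ht
    rw [hG]
    rw [Matrix.posSemidef_diagonal_iff]
    intro i
    by_cases hi : (i : ℕ) < K
    · simp only [hi, if_true]
      have hd := hdpos i hi
      have h1 : (1:ℝ) ≤ Real.exp (2 * d i * t) :=
        Real.one_le_exp (by positivity)
      exact div_nonneg (by linarith) hd.le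
    · simp only [hi, if_false]
      positivity
  have hUnit : ∀ t : ℝ, 0 ≤ t → IsUnit (1 + G t * tW₀) :=
    fun t ht => isUnit_one_add_psd_mul (hGpsd t ht) hA
  have hW0 : W 0 = W₀ := by
    have hG0 : G 0 = 0 := by
      rw [hG]
      have : (fun i : Fin n => if i.val < K then (Real.exp (2 * d i * 0) - 1) / d i else 2 * 0)
          = fun _ => (0:ℝ) := by
        funext i; by_cases hi : i.val < K <;> simp [hi]
      rw [this, Matrix.diagonal_zero]
    have hS0 : S 0 = 1 := by
      rw [hS]
      have : (fun i : Fin n => if i.val < K then Real.exp (d i * 0) else (1:ℝ))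
          = fun _ => (1:ℝ) := by
        funext i; by_cases hi : i.val < K <;> simp [hi]
      rw [this, Matrix.diagonal_one]
    rw [hW 0, hG0, hS0, htW₀]
    simp only [Matrix.zero_mul, add_zero, inv_one, Matrix.transpose_one,
      Matrix.mul_one, Matrix.one_mul]
    calc Φ * (Φᵀ * W₀ * Φ) * Φᵀ = (Φ * Φᵀ) * W₀ * (Φ * Φᵀ) := by
          simp only [mul_assoc]
      _ = W₀ := by rw [hΦ1, one_mul, mul_one]
  -- derivatives of S and G
  have hSderiv : ∀ x : ℝ, HasDerivAt S (Matrix.diagonal d * S x) x := by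
    intro x
    have scal : ∀ i : Fin n,
        HasDerivAt (fun y => if i.val < K then Real.exp (d i * y) else (1:ℝ))
          (d i * (if i.val < K then Real.exp (d i * x) else 1)) x := by
      intro i
      by_cases hi : i.val < K
      · simp only [hi, if_true]
        have h1 : HasDerivAt (fun y => Real.exp (d i * y)) (Real.exp (d i * x) * (d i * 1)) x :=
          ((hasDerivAt_id x).const_mul (d i)).exp
        convert h1 using 1; ring
      · simp only [hi, if_false]
        have h1 : HasDerivAt (fun _ : ℝ => (1:ℝ)) 0 x := hasDerivAt_const x (1:ℝ)
        convert h1 using 1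
        rw [hdzero i (not_lt.mp hi)]; ring
    have h := hasDerivAt_diagonal (fun (i : Fin n) y => if i.val < K then Real.exp (d i * y) else 1)
      (fun i => d i * (if i.val < K then Real.exp (d i * x) else 1)) x scal
    have hfun : S = fun y =>
        Matrix.diagonal (fun i => if i.val < K then Real.exp (d i * y) else (1:ℝ)) :=
      funext hS
    simp only [hfun]
    convert h using 1
    rw [Matrix.diagonal_mul_diagonal]
  have hGderiv : ∀ x : ℝ, HasDerivAt G (S x * S x + S x * S x) x := by
    intro x
    have scal : ∀ i : Fin n,
        HasDerivAt (fun y => if i.val < K then (Real.exp (2 * d i * y) - 1) / d i else 2 * y)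
          ((if i.val < K then Real.exp (d i * x) else (1:ℝ))
              * (if i.val < K then Real.exp (d i * x) else 1)
            + (if i.val < K then Real.exp (d i * x) else 1)
              * (if i.val < K then Real.exp (d i * x) else 1)) x := by
      intro i
      by_cases hi : i.val < K
      · simp only [hi, if_true]
        have hd := (hdpos i hi).ne'
        have h1 : HasDerivAt (fun y => (Real.exp (2 * d i * y) - 1) / d i)
            (Real.exp (2 * d i * x) * (2 * d i * 1) / d i) x :=
          ((((hasDerivAt_id x).const_mul (2 * d i)).exp).sub_const 1).div_const (d i)
        convert h1 using 1
        rw [show 2 * d i * x = d i * x + d i * x from by ring, Real.exp_add]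
        field_simp
        ring
      · simp only [hi, if_false]
        have h1 : HasDerivAt (fun y : ℝ => 2 * y) (2 * 1) x := (hasDerivAt_id x).const_mul 2
        convert h1 using 1
        norm_num
    have h := hasDerivAt_diagonal
      (fun (i : Fin n) y => if i.val < K then (Real.exp (2 * d i * y) - 1) / d i else 2 * y) _ x scal
    have hfun : G = fun y => Matrix.diagonal
        (fun i => if i.val < K then (Real.exp (2 * d i * y) - 1) / d i else 2 * y) :=
      funext hG
    simp only [hfun]
    convert h using 1
    rw [hS x, Matrix.diagonal_mul_diagonal, Matrix.diagonal_add]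
  -- rewrite W in terms of Ring.inverse
  have hWeq : W = fun x =>
      Φ * (S x * tW₀ * Ring.inverse (1 + G x * tW₀) * S x) * Φᵀ := by
    funext x
    have hST : (S x)ᵀ = S x := by rw [hS x]; exact Matrix.diagonal_transpose _
    rw [hW x, Matrix.nonsing_inv_eq_ringInverse, hST]
  have hcomm : ∀ x : ℝ, Matrix.diagonal d * S x = S x * Matrix.diagonal d := by
    intro x
    rw [hS x, Matrix.diagonal_mul_diagonal, Matrix.diagonal_mul_diagonal]
    exact congrArg Matrix.diagonal (funext fun i => mul_comm _ _)
  have hWderiv : ∀ t : ℝ, 0 ≤ t →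
      HasDerivWithinAt W (W t * Y + Y * W t - 2 * (W t * W t)) (Set.Ici 0) t := by
    intro t ht
    have hu : HasDerivAt (fun x => 1 + G x * tW₀) ((S t * S t + S t * S t) * tW₀) t :=
      ((hGderiv t).mul_const tW₀).const_add 1
    have hVder : HasDerivAt (fun x => Ring.inverse (1 + G x * tW₀))
        (-(Ring.inverse (1 + G t * tW₀) * ((S t * S t + S t * S t) * tW₀)
            * Ring.inverse (1 + G t * tW₀))) t := by
      obtain ⟨U, hU⟩ := hUnit t ht
      have h1 := hasFDerivAt_ringInverse (𝕜 := ℝ) U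
      have hinv : (↑U⁻¹ : Matrix (Fin n) (Fin n) ℝ) = Ring.inverse (1 + G t * tW₀) := by
        rw [← hU, Ring.inverse_unit]
      rw [hU] at h1
      have h2 := h1.comp_hasDerivAt t hu
      simpa [hinv, Function.comp_def, ContinuousLinearMap.mulLeftRight_apply] using h2
    have h4 : HasDerivAt (fun x => Φ * (S x * tW₀ * Ring.inverse (1 + G x * tW₀) * S x) * Φᵀ)
        (Φ * ((Matrix.diagonal d * S t * tW₀ * Ring.inverse (1 + G t * tW₀)
            + S t * tW₀ * -(Ring.inverse (1 + G t * tW₀) * ((S t * S t + S t * S t) * tW₀)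
              * Ring.inverse (1 + G t * tW₀))) * S t
          + S t * tW₀ * Ring.inverse (1 + G t * tW₀) * (Matrix.diagonal d * S t)) * Φᵀ) t := by
      exact ((((hSderiv t).mul_const tW₀).mul hVder).mul (hSderiv t)).const_mul Φ |>.mul_const Φᵀ
    rw [hWeq, hY]
    rw [← riccati_algebra Φ (Matrix.diagonal d) (S t) tW₀ (Ring.inverse (1 + G t * tW₀))
      hΦ2 (hcomm t)]
    exact h4.hasDerivWithinAt
  refine ⟨hUnit, hW0, hWderiv, ?_⟩
  intro W' hW'0 hW'd T hT
  -- continuity of both solutions on [0, T]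
  have hWc : ContinuousOn W (Set.Icc 0 T) := fun x hx =>
    ((hWderiv x hx.1).continuousWithinAt).mono (Set.Icc_subset_Ici_self)
  have hW'c : ContinuousOn W' (Set.Icc 0 T) := fun x hx =>
    ((hW'd x hx.1).continuousWithinAt).mono (Set.Icc_subset_Ici_self)
  obtain ⟨R1, hR1⟩ := isCompact_Icc.exists_bound_of_continuousOn hWc
  obtain ⟨R2, hR2⟩ := isCompact_Icc.exists_bound_of_continuousOn hW'c
  set R : ℝ := max (max R1 R2) 0 with hRdef
  have hR0 : 0 ≤ R := le_max_right _ _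
  set v : Matrix (Fin n) (Fin n) ℝ → Matrix (Fin n) (Fin n) ℝ :=
    fun x => x * Y + Y * x - 2 * (x * x) with hvdef
  set Kc : NNReal := Real.toNNReal (2 * ‖Y‖ + 4 * R) with hKdef
  have hlip : LipschitzOnWith Kc v (Metric.closedBall (0 : Matrix (Fin n) (Fin n) ℝ) R) := by
    apply LipschitzOnWith.of_dist_le_mul
    intro a ha b hb
    rw [dist_eq_norm, dist_eq_norm]
    have hk : v a - v b = (a - b) * Y + Y * (a - b) - 2 * (a * (a - b)) - 2 * ((a - b) * b) := by
      simp only [hvdef]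
      noncomm_ring
    have hna : ‖a‖ ≤ R := mem_closedBall_zero_iff.mp ha
    have hnb : ‖b‖ ≤ R := mem_closedBall_zero_iff.mp hb
    have key : ‖v a - v b‖ ≤ (2 * ‖Y‖ + 4 * R) * ‖a - b‖ := by
      rw [hk]
      have e1 : ‖(a - b) * Y‖ ≤ ‖a - b‖ * ‖Y‖ := norm_mul_le _ _
      have e2 : ‖Y * (a - b)‖ ≤ ‖Y‖ * ‖a - b‖ := norm_mul_le _ _
      have e3 : ‖2 * (a * (a - b))‖ ≤ 2 * (R * ‖a - b‖) := by
        calc ‖2 * (a * (a - b))‖ = ‖a * (a - b) + a * (a - b)‖ := by rw [two_mul]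
          _ ≤ ‖a * (a - b)‖ + ‖a * (a - b)‖ := norm_add_le _ _
          _ ≤ 2 * (R * ‖a - b‖) := by
              have := norm_mul_le a (a - b)
              nlinarith [norm_nonneg (a - b), norm_nonneg a]
      have e4 : ‖2 * ((a - b) * b)‖ ≤ 2 * (R * ‖a - b‖) := by
        calc ‖2 * ((a - b) * b)‖ = ‖(a - b) * b + (a - b) * b‖ := by rw [two_mul]
          _ ≤ ‖(a - b) * b‖ + ‖(a - b) * b‖ := norm_add_le _ _
          _ ≤ 2 * (R * ‖a - b‖) := by
              have := norm_mul_le (a - b) b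
              nlinarith [norm_nonneg (a - b), norm_nonneg b]
      calc ‖(a - b) * Y + Y * (a - b) - 2 * (a * (a - b)) - 2 * ((a - b) * b)‖
          ≤ ‖(a - b) * Y + Y * (a - b) - 2 * (a * (a - b))‖ + ‖2 * ((a - b) * b)‖ :=
            norm_sub_le _ _
        _ ≤ ‖(a - b) * Y + Y * (a - b)‖ + ‖2 * (a * (a - b))‖ + ‖2 * ((a - b) * b)‖ := by
            have := norm_sub_le ((a - b) * Y + Y * (a - b)) (2 * (a * (a - b)))
            linarith
        _ ≤ ‖(a - b) * Y‖ + ‖Y * (a - b)‖ + ‖2 * (a * (a - b))‖ + ‖2 * ((a - b) * b)‖ := by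
            have := norm_add_le ((a - b) * Y) (Y * (a - b))
            linarith
        _ ≤ (2 * ‖Y‖ + 4 * R) * ‖a - b‖ := by nlinarith [norm_nonneg Y]
    calc ‖v a - v b‖ ≤ (2 * ‖Y‖ + 4 * R) * ‖a - b‖ := key
      _ = (Kc : ℝ) * ‖a - b‖ := by
          rw [hKdef, Real.coe_toNNReal _ (by positivity)]
  have hmemW : ∀ x ∈ Set.Ico (0:ℝ) T, W x ∈ Metric.closedBall (0 : Matrix (Fin n) (Fin n) ℝ) R := by
    intro x hx
    rw [Metric.mem_closedBall, dist_zero_right]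
    exact le_trans (hR1 x ⟨hx.1, hx.2.le⟩) (le_trans (le_max_left _ _) (le_max_left _ _))
  have hmemW' : ∀ x ∈ Set.Ico (0:ℝ) T,
      W' x ∈ Metric.closedBall (0 : Matrix (Fin n) (Fin n) ℝ) R := by
    intro x hx
    rw [Metric.mem_closedBall, dist_zero_right]
    exact le_trans (hR2 x ⟨hx.1, hx.2.le⟩) (le_trans (le_max_right _ _) (le_max_left _ _))
  have huniq := ODE_solution_unique_of_mem_Icc_right
    (v := fun _ x => v x) (s := fun _ => Metric.closedBall (0 : Matrix (Fin n) (Fin n) ℝ) R)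
    (K := Kc) (fun _ _ => hlip) hW'c
    (fun x hx => ((hW'd x hx.1).mono (Set.Ici_subset_Ici.mpr hx.1)))
    hmemW' hWc
    (fun x hx => ((hWderiv x hx.1).mono (Set.Ici_subset_Ici.mpr hx.1)))
    hmemW (hW'0.trans hW0.symm)
  exact huniq ⟨hT, le_refl T⟩
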